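/- Fix integers d ≥ 1 and N ≥ 1 and set ε := 1/N. Index fine-lattice sites by x ∈ ℤ^d (representing the point εx) and coarse points by y ∈ N·ℤ^d, with block B(y) := {x ∈ ℤ^d : y_μ ≤ x_μ < y_μ + N for all μ} and block average (Qφ)(y) := N^{−d} Σ_{x ∈ B(y)} φ(x); let (Δφ)(x) := ε^{−2} Σ_{μ=1}^d (φ(x+e_μ) + φ(x−e_μ) − 2φ(x)). Let Λ ⊆ ℤ^d be a finite union of blocks, let c > 0 and μ̄ ≥ 0, and for a coarse field Φ : N·ℤ^d → ℝ and a fine field φ : ℤ^d → ℝ define S*(Λ; Φ, φ) := (c/2) Σ_{y : B(y) ⊆ Λ} (Φ(y) − (Qφ)(y))² + (1/2)⟨∂φ, ∂φ⟩_{*,Λ} + (μ̄/2) Σ_{x∈Λ} ε^d φ(x)², where ⟨∂f, ∂g⟩_{*,Λ} := Σ ε^{d−2}(f(x′)−f(x))(g(x′)−g(x)) over unordered nearest-neighbour pairs {x,x′} ⊆ Λ plus (1/2)·Σ ε^{d−2}(f(x′)−f(x))(g(x′)−g(x)) over nearest-neighbour pairs with x ∈ Λ, x′ ∉ Λ. Suppose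 φ satisfies the field equation (−Δφ)(x) + μ̄·φ(x) = c·(Φ(y(x)) − (Qφ)(y(x))) for every x ∈ Λ, where y(x) is the coarse point with x ∈ B(y(x)). Then for every coarse field Z : N·ℤ^d → ℝ and every fine field 𝒵 : ℤ^d → ℝ, S*(Λ; Φ + Z, φ + 𝒵) = S*(Λ; Φ, φ) + S*(Λ; Z, 𝒵) + c·Σ_{y : B(y) ⊆ Λ} Z(y)(Φ(y) − (Qφ)(y)) + 𝖻_Λ(∂φ, 𝒵), where 𝖻_Λ(∂φ, 𝒵) := (1/2) Σ_{x∈Λ, x′∉Λ nearest neighbours} ε^{d−2}(φ(x′) − φ(x))(𝒵(x) + 𝒵(x′)). -/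

import Mathlib

open Finset

/-- Fine lattice sites, representing the points `εx`, `x ∈ ℤ^d`. -/
abbrev Site (d : ℕ) := Fin d → ℤ

/-- The lattice spacing `ε = 1/N`. -/
noncomputable def eps (N : ℕ) : ℝ := 1 / N

/-- The standard unit lattice vector in direction `μ`. -/
def unitVec (d : ℕ) (μ : Fin d) : Site d := fun ν => if ν = μ then 1 else 0

/-- The block `B(y)` of fine sites belonging to the coarse point `y = N·z`:
`{x : N z_μ ≤ x_μ < N z_μ + N}`. -/
noncomputable def block (d N : ℕ) (z : Site d) : Finset (Site d) :=
  Fintype.piFinset fun μ => Finset.Ico ((N : ℤ) * z μ) ((N : ℤ) * z μ + (N : ℤ))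

/-- The block average `(Qφ)(y) = N^{-d} Σ_{x ∈ B(y)} φ(x)` at the coarse point `y = N·z`. -/
noncomputable def Qavg (d N : ℕ) (φ : Site d → ℝ) (z : Site d) : ℝ :=
  ((N : ℝ) ^ d)⁻¹ * ∑ x ∈ block d N z, φ x

/-- The lattice Laplacian `(Δφ)(x) = ε^{-2} Σ_μ (φ(x+e_μ) + φ(x−e_μ) − 2φ(x))`. -/
noncomputable def lap (d N : ℕ) (φ : Site d → ℝ) (x : Site d) : ℝ :=
  eps N ^ (-2 : ℤ) *
    ∑ μ : Fin d, (φ (x + unitVec d μ) + φ (x - unitVec d μ) - 2 * φ x)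

/-- `⟨∂f, ∂g⟩_{*,Λ}`: the sum of `ε^{d−2}(f(x′)−f(x))(g(x′)−g(x))` over unordered
nearest-neighbour pairs `{x,x′} ⊆ Λ`, plus one half of the same sum over nearest-neighbour
pairs with `x ∈ Λ`, `x′ ∉ Λ`. -/
noncomputable def gradForm (d N : ℕ) (Λ : Finset (Site d)) (f g : Site d → ℝ) : ℝ :=
  (∑ x ∈ Λ, ∑ μ : Fin d,
      if x + unitVec d μ ∈ Λ then
        eps N ^ ((d : ℤ) - 2) * (f (x + unitVec d μ) - f x) * (g (x + unitVec d μ) - g x)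
      else 0)
    + 1 / 2 *
      ∑ x ∈ Λ, ∑ μ : Fin d,
        ((if x + unitVec d μ ∉ Λ then
            eps N ^ ((d : ℤ) - 2) * (f (x + unitVec d μ) - f x) * (g (x + unitVec d μ) - g x)
          else 0)
          +
          (if x - unitVec d μ ∉ Λ then
            eps N ^ ((d : ℤ) - 2) * (f (x - unitVec d μ) - f x) * (g (x - unitVec d μ) - g x)
          else 0))

/-- The action
`S*(Λ; Φ, φ) = (c/2)Σ_{y: B(y) ⊆ Λ}(Φ(y) − Qφ(y))² + (1/2)⟨∂φ,∂φ⟩_{*,Λ} + (μ̄/2)Σ_{x∈Λ} ε^d φ(x)²`,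
for `Λ` the union of the blocks with coarse labels in `Λc`. -/
noncomputable def Sstar (d N : ℕ) (c mubar : ℝ) (Λc : Finset (Site d))
    (Φ φ : Site d → ℝ) : ℝ :=
  c / 2 * ∑ z ∈ Λc, (Φ z - Qavg d N φ z) ^ 2
    + 1 / 2 * gradForm d N (Λc.biUnion (block d N)) φ φ
    + mubar / 2 * ∑ x ∈ Λc.biUnion (block d N), eps N ^ d * φ x ^ 2

/-- The boundary term
`𝖻_Λ(∂φ, 𝒵) = (1/2) Σ_{x∈Λ, x′∉Λ nn} ε^{d−2}(φ(x′) − φ(x))(𝒵(x) + 𝒵(x′))`. -/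
noncomputable def bdryTerm (d N : ℕ) (Λ : Finset (Site d)) (φ Z : Site d → ℝ) : ℝ :=
  1 / 2 *
    ∑ x ∈ Λ, ∑ μ : Fin d,
      ((if x + unitVec d μ ∉ Λ then
          eps N ^ ((d : ℤ) - 2) * (φ (x + unitVec d μ) - φ x) * (Z x + Z (x + unitVec d μ))
        else 0)
        +
        (if x - unitVec d μ ∉ Λ then
          eps N ^ ((d : ℤ) - 2) * (φ (x - unitVec d μ) - φ x) * (Z x + Z (x - unitVec d μ))
        else 0))


lemma sum_shift {d : ℕ} (Λ : Finset (Site d)) (e : Site d) (F : Site d → ℝ) :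
    (∑ x ∈ Λ, if x + e ∈ Λ then F x else 0)
      = ∑ x ∈ Λ, if x - e ∈ Λ then F (x - e) else 0 := by
  rw [← Finset.sum_filter, ← Finset.sum_filter]
  refine Finset.sum_nbij' (fun x => x + e) (fun x => x - e) ?_ ?_ ?_ ?_ ?_
  · intro a ha
    simp only [Finset.mem_filter] at *
    exact ⟨ha.2, by simpa [add_sub_cancel_right] using ha.1⟩
  · intro a ha
    simp only [Finset.mem_filter] at *
    exact ⟨ha.2, by simpa [sub_add_cancel] using ha.1⟩
  · intro a _; simp [add_sub_cancel_right]
  · intro a _; simp [sub_add_cancel]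
  · intro a _; simp [add_sub_cancel_right]

lemma sum_sum_add {α β : Type*} {s : Finset α} {t : Finset β} (f g : α → β → ℝ) :
    (∑ x ∈ s, ∑ y ∈ t, f x y) + (∑ x ∈ s, ∑ y ∈ t, g x y)
      = ∑ x ∈ s, ∑ y ∈ t, (f x y + g x y) := by
  rw [← Finset.sum_add_distrib]
  exact Finset.sum_congr rfl fun x _ => (Finset.sum_add_distrib).symm

lemma sum_split3' {α : Type*} {s : Finset α} (F G H K : α → ℝ)
    (h : ∀ x ∈ s, F x = G x + H x + 2 * K x) :
    ∑ x ∈ s, F x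
      = (∑ x ∈ s, G x) + (∑ x ∈ s, H x) + 2 * ∑ x ∈ s, K x := by
  rw [Finset.mul_sum, ← Finset.sum_add_distrib, ← Finset.sum_add_distrib]
  exact Finset.sum_congr rfl h

lemma sum_sum_split3 {α β : Type*} {s : Finset α} {t : Finset β} (F G H K : α → β → ℝ)
    (h : ∀ x ∈ s, ∀ y ∈ t, F x y = G x y + H x y + 2 * K x y) :
    (∑ x ∈ s, ∑ y ∈ t, F x y)
      = (∑ x ∈ s, ∑ y ∈ t, G x y) + (∑ x ∈ s, ∑ y ∈ t, H x y)
        + 2 * ∑ x ∈ s, ∑ y ∈ t, K x y := by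
  rw [Finset.mul_sum, ← Finset.sum_add_distrib, ← Finset.sum_add_distrib]
  refine Finset.sum_congr rfl fun x hx => ?_
  rw [Finset.mul_sum, ← Finset.sum_add_distrib, ← Finset.sum_add_distrib]
  exact Finset.sum_congr rfl fun y hy => h x hx y hy

lemma block_disjoint {d N : ℕ} (hN : 1 ≤ N) {z₁ z₂ : Site d} (h : z₁ ≠ z₂) :
    Disjoint (block d N z₁) (block d N z₂) := by
  rw [Finset.disjoint_left]
  intro x h1 h2
  apply h
  funext μ
  simp only [block, Fintype.mem_piFinset, Finset.mem_Ico] at h1 h2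
  obtain ⟨a1, a2⟩ := h1 μ
  obtain ⟨b1, b2⟩ := h2 μ
  have hN' : (0:ℤ) < N := by exact_mod_cast hN
  have c1 : (N:ℤ) * z₁ μ < N * (z₂ μ + 1) := by linarith [mul_add (N:ℤ) (z₂ μ) 1]
  have c2 : (N:ℤ) * z₂ μ < N * (z₁ μ + 1) := by linarith [mul_add (N:ℤ) (z₁ μ) 1]
  have d1 := lt_of_mul_lt_mul_left c1 (le_of_lt hN')
  have d2 := lt_of_mul_lt_mul_left c2 (le_of_lt hN')
  omega

lemma gradForm_sq (d N : ℕ) (Λ : Finset (Site d)) (f g : Site d → ℝ) :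
    gradForm d N Λ (f + g) (f + g)
      = gradForm d N Λ f f + gradForm d N Λ g g + 2 * gradForm d N Λ f g := by
  unfold gradForm
  simp only [Pi.add_apply]
  have h1 : (∑ x ∈ Λ, ∑ μ : Fin d,
        if x + unitVec d μ ∈ Λ then
          eps N ^ ((d : ℤ) - 2) * ((f (x + unitVec d μ) + g (x + unitVec d μ)) - (f x + g x))
            * ((f (x + unitVec d μ) + g (x + unitVec d μ)) - (f x + g x))
        else 0)
      = (∑ x ∈ Λ, ∑ μ : Fin d,
          if x + unitVec d μ ∈ Λ then
            eps N ^ ((d : ℤ) - 2) * (f (x + unitVec d μ) - f x) * (f (x + unitVec d μ) - f x)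
          else 0)
        + (∑ x ∈ Λ, ∑ μ : Fin d,
          if x + unitVec d μ ∈ Λ then
            eps N ^ ((d : ℤ) - 2) * (g (x + unitVec d μ) - g x) * (g (x + unitVec d μ) - g x)
          else 0)
        + 2 * ∑ x ∈ Λ, ∑ μ : Fin d,
          if x + unitVec d μ ∈ Λ then
            eps N ^ ((d : ℤ) - 2) * (f (x + unitVec d μ) - f x) * (g (x + unitVec d μ) - g x)
          else 0 :=
    sum_sum_split3 _ _ _ _ (fun x _ μ _ => by split_ifs <;> ring)
  have h2 : (∑ x ∈ Λ, ∑ μ : Fin d,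
        ((if x + unitVec d μ ∉ Λ then
            eps N ^ ((d : ℤ) - 2) * ((f (x + unitVec d μ) + g (x + unitVec d μ)) - (f x + g x))
              * ((f (x + unitVec d μ) + g (x + unitVec d μ)) - (f x + g x))
          else 0)
          + (if x - unitVec d μ ∉ Λ then
            eps N ^ ((d : ℤ) - 2) * ((f (x - unitVec d μ) + g (x - unitVec d μ)) - (f x + g x))
              * ((f (x - unitVec d μ) + g (x - unitVec d μ)) - (f x + g x))
          else 0)))
      = (∑ x ∈ Λ, ∑ μ : Fin d,
          ((if x + unitVec d μ ∉ Λ then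
              eps N ^ ((d : ℤ) - 2) * (f (x + unitVec d μ) - f x) * (f (x + unitVec d μ) - f x)
            else 0)
            + (if x - unitVec d μ ∉ Λ then
              eps N ^ ((d : ℤ) - 2) * (f (x - unitVec d μ) - f x) * (f (x - unitVec d μ) - f x)
            else 0)))
        + (∑ x ∈ Λ, ∑ μ : Fin d,
          ((if x + unitVec d μ ∉ Λ then
              eps N ^ ((d : ℤ) - 2) * (g (x + unitVec d μ) - g x) * (g (x + unitVec d μ) - g x)
            else 0)
            + (if x - unitVec d μ ∉ Λ then
              eps N ^ ((d : ℤ) - 2) * (g (x - unitVec d μ) - g x) * (g (x - unitVec d μ) - g x)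
            else 0)))
        + 2 * ∑ x ∈ Λ, ∑ μ : Fin d,
          ((if x + unitVec d μ ∉ Λ then
              eps N ^ ((d : ℤ) - 2) * (f (x + unitVec d μ) - f x) * (g (x + unitVec d μ) - g x)
            else 0)
            + (if x - unitVec d μ ∉ Λ then
              eps N ^ ((d : ℤ) - 2) * (f (x - unitVec d μ) - f x) * (g (x - unitVec d μ) - g x)
            else 0)) :=
    sum_sum_split3 _ _ _ _ (fun x _ μ _ => by split_ifs <;> ring)
  rw [h1, h2]
  ring

lemma sum_sum_split2 {α β : Type*} {s : Finset α} {t : Finset β} (F G K : α → β → ℝ)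
    (h : ∀ x ∈ s, ∀ y ∈ t, F x y = G x y + 2 * K x y) :
    (∑ x ∈ s, ∑ y ∈ t, F x y)
      = (∑ x ∈ s, ∑ y ∈ t, G x y) + 2 * ∑ x ∈ s, ∑ y ∈ t, K x y := by
  rw [Finset.mul_sum, ← Finset.sum_add_distrib]
  refine Finset.sum_congr rfl fun x hx => ?_
  rw [Finset.mul_sum, ← Finset.sum_add_distrib]
  exact Finset.sum_congr rfl fun y hy => h x hx y hy

lemma sum_by_parts (d N : ℕ) (hN : 1 ≤ N) (Λ : Finset (Site d)) (φ Z : Site d → ℝ) :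
    gradForm d N Λ φ Z
      = (∑ x ∈ Λ, eps N ^ d * (-lap d N φ x) * Z x) + bdryTerm d N Λ φ Z := by
  have hNr : (0:ℝ) < N := by exact_mod_cast hN
  have heps : eps N ≠ 0 := by rw [eps]; exact one_div_ne_zero (ne_of_gt hNr)
  have hw : eps N ^ d * eps N ^ (-2:ℤ) = eps N ^ ((d:ℤ) - 2) := by
    rw [← zpow_natCast (eps N) d, ← zpow_add₀ heps]
    congr 1
  have hlap : (∑ x ∈ Λ, eps N ^ d * (-lap d N φ x) * Z x)
      = ∑ x ∈ Λ, ∑ μ : Fin d,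
          (-(eps N ^ ((d:ℤ) - 2)
            * ((φ (x + unitVec d μ) - φ x) + (φ (x - unitVec d μ) - φ x)) * Z x)) := by
    refine Finset.sum_congr rfl fun x _ => ?_
    unfold lap
    rw [Finset.sum_neg_distrib, ← Finset.sum_mul, ← Finset.mul_sum]
    have hT : (∑ μ : Fin d, ((φ (x + unitVec d μ) - φ x) + (φ (x - unitVec d μ) - φ x)))
        = ∑ μ : Fin d, (φ (x + unitVec d μ) + φ (x - unitVec d μ) - 2 * φ x) :=
      Finset.sum_congr rfl fun μ _ => by ring
    rw [hT]
    linear_combination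
      (-(∑ μ : Fin d, (φ (x + unitVec d μ) + φ (x - unitVec d μ) - 2 * φ x)) * Z x) * hw
  have hcore : (∑ x ∈ Λ, ∑ μ : Fin d, if x + unitVec d μ ∈ Λ then
          eps N ^ ((d:ℤ) - 2) * (φ (x + unitVec d μ) - φ x) * Z (x + unitVec d μ) else 0)
      = -∑ x ∈ Λ, ∑ μ : Fin d, (if x - unitVec d μ ∈ Λ then
          eps N ^ ((d:ℤ) - 2) * (φ (x - unitVec d μ) - φ x) * Z x else 0) := by
    conv_lhs => rw [Finset.sum_comm]
    conv_rhs => rw [Finset.sum_comm]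
    rw [← Finset.sum_neg_distrib]
    refine Finset.sum_congr rfl fun μ _ => ?_
    rw [← Finset.sum_neg_distrib]
    have hs := sum_shift Λ (unitVec d μ)
      (fun x => eps N ^ ((d:ℤ) - 2) * (φ (x + unitVec d μ) - φ x) * Z (x + unitVec d μ))
    simp only [sub_add_cancel] at hs
    rw [hs]
    refine Finset.sum_congr rfl fun x _ => ?_
    split_ifs <;> ring
  unfold gradForm bdryTerm
  rw [hlap]
  have hA : (∑ x ∈ Λ, ∑ μ : Fin d, if x + unitVec d μ ∈ Λ then
        eps N ^ ((d:ℤ) - 2) * (φ (x + unitVec d μ) - φ x) * (Z (x + unitVec d μ) - Z x) else 0)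
        + (∑ x ∈ Λ, ∑ μ : Fin d, if x + unitVec d μ ∈ Λ then
        eps N ^ ((d:ℤ) - 2) * (φ (x + unitVec d μ) - φ x) * Z x else 0)
      = ∑ x ∈ Λ, ∑ μ : Fin d, if x + unitVec d μ ∈ Λ then
        eps N ^ ((d:ℤ) - 2) * (φ (x + unitVec d μ) - φ x) * Z (x + unitVec d μ) else 0 := by
    rw [sum_sum_add]
    exact Finset.sum_congr rfl fun x _ => Finset.sum_congr rfl fun μ _ => by split_ifs <;> ring
  have hB23 : (∑ x ∈ Λ, ∑ μ : Fin d, if x + unitVec d μ ∈ Λ then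
        eps N ^ ((d:ℤ) - 2) * (φ (x + unitVec d μ) - φ x) * Z x else 0)
        + (∑ x ∈ Λ, ∑ μ : Fin d, if x - unitVec d μ ∈ Λ then
        eps N ^ ((d:ℤ) - 2) * (φ (x - unitVec d μ) - φ x) * Z x else 0)
      = ∑ x ∈ Λ, ∑ μ : Fin d,
          ((if x + unitVec d μ ∈ Λ then
            eps N ^ ((d:ℤ) - 2) * (φ (x + unitVec d μ) - φ x) * Z x else 0)
          + (if x - unitVec d μ ∈ Λ then
            eps N ^ ((d:ℤ) - 2) * (φ (x - unitVec d μ) - φ x) * Z x else 0)) :=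
    sum_sum_add _ _
  have hBfull : (∑ x ∈ Λ, ∑ μ : Fin d,
        (-(eps N ^ ((d:ℤ) - 2)
            * ((φ (x + unitVec d μ) - φ x) + (φ (x - unitVec d μ) - φ x)) * Z x)))
        + (∑ x ∈ Λ, ∑ μ : Fin d,
          ((if x + unitVec d μ ∈ Λ then
            eps N ^ ((d:ℤ) - 2) * (φ (x + unitVec d μ) - φ x) * Z x else 0)
          + (if x - unitVec d μ ∈ Λ then
            eps N ^ ((d:ℤ) - 2) * (φ (x - unitVec d μ) - φ x) * Z x else 0)))
      = ∑ x ∈ Λ, ∑ μ : Fin d,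
          ((-(eps N ^ ((d:ℤ) - 2)
            * ((φ (x + unitVec d μ) - φ x) + (φ (x - unitVec d μ) - φ x)) * Z x))
          + ((if x + unitVec d μ ∈ Λ then
            eps N ^ ((d:ℤ) - 2) * (φ (x + unitVec d μ) - φ x) * Z x else 0)
          + (if x - unitVec d μ ∈ Λ then
            eps N ^ ((d:ℤ) - 2) * (φ (x - unitVec d μ) - φ x) * Z x else 0))) :=
    sum_sum_add _ _
  have hB : (∑ x ∈ Λ, ∑ μ : Fin d,
        ((if x + unitVec d μ ∉ Λ then
            eps N ^ ((d:ℤ) - 2) * (φ (x + unitVec d μ) - φ x) * (Z (x + unitVec d μ) - Z x)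
          else 0)
          + (if x - unitVec d μ ∉ Λ then
            eps N ^ ((d:ℤ) - 2) * (φ (x - unitVec d μ) - φ x) * (Z (x - unitVec d μ) - Z x)
          else 0)))
      = (∑ x ∈ Λ, ∑ μ : Fin d,
          ((if x + unitVec d μ ∉ Λ then
              eps N ^ ((d:ℤ) - 2) * (φ (x + unitVec d μ) - φ x) * (Z x + Z (x + unitVec d μ))
            else 0)
            + (if x - unitVec d μ ∉ Λ then
              eps N ^ ((d:ℤ) - 2) * (φ (x - unitVec d μ) - φ x) * (Z x + Z (x - unitVec d μ))
            else 0)))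
        + 2 * ∑ x ∈ Λ, ∑ μ : Fin d,
            ((-(eps N ^ ((d:ℤ) - 2)
              * ((φ (x + unitVec d μ) - φ x) + (φ (x - unitVec d μ) - φ x)) * Z x))
            + ((if x + unitVec d μ ∈ Λ then
              eps N ^ ((d:ℤ) - 2) * (φ (x + unitVec d μ) - φ x) * Z x else 0)
            + (if x - unitVec d μ ∈ Λ then
              eps N ^ ((d:ℤ) - 2) * (φ (x - unitVec d μ) - φ x) * Z x else 0))) :=
    sum_sum_split2 _ _ _ (fun x _ μ _ => by split_ifs <;> ring)
  linarith [hA, hB23, hBfull, hB, hcore]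

/-- Expansion of the action around a background field satisfying the field
equation `−Δφ + μ̄φ = c(Φ − Qφ)` on `Λ`: for all fluctuation fields `Zc` (coarse) and
`Zf` (fine),
`S*(Λ; Φ+Zc, φ+Zf) = S*(Λ; Φ, φ) + S*(Λ; Zc, Zf) + c Σ_y Zc(y)(Φ(y) − Qφ(y)) + 𝖻_Λ(∂φ, Zf)`. -/
theorem quadratic_expansion_around_background
    (d N : ℕ) (hd : 1 ≤ d) (hN : 1 ≤ N)
    (c mubar : ℝ) (hc : 0 < c) (hmu : 0 ≤ mubar)
    (Λc : Finset (Site d)) (Φ φ : Site d → ℝ)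
    (hfield : ∀ z ∈ Λc, ∀ x ∈ block d N z,
      -lap d N φ x + mubar * φ x = c * (Φ z - Qavg d N φ z))
    (Zc Zf : Site d → ℝ) :
    Sstar d N c mubar Λc (Φ + Zc) (φ + Zf)
      = Sstar d N c mubar Λc Φ φ + Sstar d N c mubar Λc Zc Zf
        + c * ∑ z ∈ Λc, Zc z * (Φ z - Qavg d N φ z)
        + bdryTerm d N (Λc.biUnion (block d N)) φ Zf := by
  have hQadd : ∀ z, Qavg d N (φ + Zf) z = Qavg d N φ z + Qavg d N Zf z := by
    intro z
    simp [Qavg, Finset.sum_add_distrib, mul_add]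
  have hepsd : eps N ^ d = ((N : ℝ) ^ d)⁻¹ := by
    rw [eps, div_pow, one_pow, one_div]
  have hdisj : (Λc : Set (Site d)).PairwiseDisjoint (block d N) :=
    fun z₁ _ z₂ _ hne => block_disjoint hN hne
  have hfe : c * (∑ z ∈ Λc, (Φ z - Qavg d N φ z) * Qavg d N Zf z)
      = ∑ x ∈ Λc.biUnion (block d N), eps N ^ d * (-lap d N φ x + mubar * φ x) * Zf x := by
    rw [Finset.sum_biUnion hdisj, Finset.mul_sum]
    refine Finset.sum_congr rfl fun z hz => ?_
    have hpt : ∀ x ∈ block d N z,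
        eps N ^ d * (-lap d N φ x + mubar * φ x) * Zf x
          = ((N : ℝ) ^ d)⁻¹ * (c * (Φ z - Qavg d N φ z)) * Zf x := by
      intro x hx
      rw [hfield z hz x hx, hepsd]
    rw [Finset.sum_congr rfl hpt, ← Finset.mul_sum]
    simp only [Qavg]
    ring
  have hsbp := sum_by_parts d N hN (Λc.biUnion (block d N)) φ Zf
  have e1 : ∑ z ∈ Λc, ((Φ + Zc) z - Qavg d N (φ + Zf) z) ^ 2
      = (∑ z ∈ Λc, (Φ z - Qavg d N φ z) ^ 2)
        + (∑ z ∈ Λc, (Zc z - Qavg d N Zf z) ^ 2)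
        + 2 * ∑ z ∈ Λc, (Φ z - Qavg d N φ z) * (Zc z - Qavg d N Zf z) :=
    sum_split3' _ _ _ _ (fun z _ => by
      rw [hQadd z]; simp only [Pi.add_apply]; ring)
  have e3 : ∑ x ∈ Λc.biUnion (block d N), eps N ^ d * (φ + Zf) x ^ 2
      = (∑ x ∈ Λc.biUnion (block d N), eps N ^ d * φ x ^ 2)
        + (∑ x ∈ Λc.biUnion (block d N), eps N ^ d * Zf x ^ 2)
        + 2 * ∑ x ∈ Λc.biUnion (block d N), eps N ^ d * (φ x * Zf x) :=
    sum_split3' _ _ _ _ (fun x _ => by simp only [Pi.add_apply]; ring)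
  have e2 := gradForm_sq d N (Λc.biUnion (block d N)) φ Zf
  have ecross : ∑ z ∈ Λc, (Φ z - Qavg d N φ z) * (Zc z - Qavg d N Zf z)
      = (∑ z ∈ Λc, Zc z * (Φ z - Qavg d N φ z))
        - ∑ z ∈ Λc, (Φ z - Qavg d N φ z) * Qavg d N Zf z := by
    rw [← Finset.sum_sub_distrib]
    exact Finset.sum_congr rfl fun z _ => by ring
  have esplitlap : ∑ x ∈ Λc.biUnion (block d N), eps N ^ d * (-lap d N φ x + mubar * φ x) * Zf x
      = (∑ x ∈ Λc.biUnion (block d N), eps N ^ d * (-lap d N φ x) * Zf x)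
        + mubar * ∑ x ∈ Λc.biUnion (block d N), eps N ^ d * (φ x * Zf x) := by
    rw [Finset.mul_sum, ← Finset.sum_add_distrib]
    exact Finset.sum_congr rfl fun x _ => by ring
  unfold Sstar
  rw [e1, e2, e3]
  linear_combination (c : ℝ) * ecross + hsbp - hfe - esplitlap
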